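/- For all natural numbers k, s ≥ 1 and every real M ≥ 3, one has ∑_{m ≤ M} τ_k(m)^s ≤ M · (2 log M)^{k^s − 1}. -/

import Mathlib

open Finset

/-- The `k`-fold divisor function `τ_k(n)`: the number of `k`-tuples
`(a_1, …, a_k)` of positive integers with `a_1 ⋯ a_k = n`. -/

def tauk (k n : ℕ) : ℕ :=
  ((Fintype.piFinset fun _ : Fin k => Finset.Icc 1 n).filter fun f => ∏ i, f i = n).card

def tset (k n : ℕ) : Finset (Fin k → ℕ) :=
  (Fintype.piFinset fun _ : Fin k => Finset.Icc 1 n).filter fun f => ∏ i, f i = n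

lemma tauk_eq_card (k n : ℕ) : tauk k n = (tset k n).card := rfl

lemma mem_tset {k n : ℕ} (hn : 1 ≤ n) {f : Fin k → ℕ} :
    f ∈ tset k n ↔ ∏ i, f i = n := by
  simp only [tset, mem_filter, Fintype.mem_piFinset, mem_Icc, and_iff_right_iff_imp]
  intro hf i
  have hdvd : f i ∣ n := hf ▸ Finset.dvd_prod_of_mem f (mem_univ i)
  exact ⟨Nat.one_le_iff_ne_zero.2 fun h => by simp [h] at hdvd; omega,
    Nat.le_of_dvd hn hdvd⟩

lemma tauk_one_right (k : ℕ) : tauk k 1 = 1 := by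
  rw [tauk_eq_card]
  have : tset k 1 = {fun _ => 1} := by
    ext f
    rw [mem_tset le_rfl, Finset.mem_singleton]
    constructor
    · intro h
      funext i
      have : f i ∣ 1 := h ▸ Finset.dvd_prod_of_mem f (mem_univ i)
      simpa using this
    · rintro rfl; simp
  simp [this]

lemma tauk_one_left {n : ℕ} (hn : 1 ≤ n) : tauk 1 n = 1 := by
  rw [tauk_eq_card]
  have : tset 1 n = {fun _ => n} := by
    ext f
    rw [mem_tset hn, Finset.mem_singleton]
    constructor
    · intro h
      funext i
      have := Fin.fin_one_eq_zero i
      subst this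
      simpa using h
    · rintro rfl; simp
  simp [this]

lemma exists_split : ∀ (b : ℕ) (z : Fin b → ℕ) (u : ℕ), 1 ≤ u → u ∣ ∏ i, z i →
    ∃ x : Fin b → ℕ, (∀ i, x i ∣ z i) ∧ ∏ i, x i = u
  | 0, z, u, hu, hdvd => by
      refine ⟨fun _ => 1, fun i => i.elim0, ?_⟩
      simp at hdvd ⊢
      omega
  | (b+1), z, u, hu, hdvd => by
      rw [Fin.prod_univ_succ] at hdvd
      set g := Nat.gcd u (z 0) with hg
      have hgpos : 0 < g := Nat.gcd_pos_of_pos_left _ hu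
      have hgu : g ∣ u := Nat.gcd_dvd_left _ _
      have hgz : g ∣ z 0 := Nat.gcd_dvd_right _ _
      have hcop : Nat.Coprime (u / g) (z 0 / g) := Nat.coprime_div_gcd_div_gcd hgpos
      have h1 : u / g ∣ (z 0 / g) * ∏ i : Fin b, z i.succ := by
        have : g * (u / g) ∣ g * ((z 0 / g) * ∏ i : Fin b, z i.succ) := by
          rw [Nat.mul_div_cancel' hgu, ← mul_assoc, Nat.mul_div_cancel' hgz]
          exact hdvd
        exact (mul_dvd_mul_iff_left hgpos.ne').mp this
      have h2 : u / g ∣ ∏ i : Fin b, z i.succ := hcop.dvd_of_dvd_mul_left h1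
      have hupos : 1 ≤ u / g := Nat.one_le_div_iff hgpos |>.2 (Nat.le_of_dvd hu hgu)
      obtain ⟨x', hx'd, hx'p⟩ := exists_split b (fun i => z i.succ) (u / g) hupos h2
      refine ⟨Fin.cons g x', ?_, ?_⟩
      · intro i
        refine Fin.cases ?_ ?_ i
        · simpa using hgz
        · intro j; simpa using hx'd j
      · rw [Fin.prod_univ_succ]
        simp only [Fin.cons_zero, Fin.cons_succ]
        rw [hx'p, Nat.mul_div_cancel' hgu]

lemma tset_one_card (b : ℕ) : (tset b 1).card = 1 := by
  have : tset b 1 = {fun _ => 1} := by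
    ext f
    simp only [tset, Finset.mem_filter, Fintype.mem_piFinset, Finset.mem_Icc,
      Finset.mem_singleton]
    constructor
    · rintro ⟨h1, -⟩
      funext i
      have := h1 i
      omega
    · rintro rfl; simp
  simp [this]


lemma tset_mul_le {b u v : ℕ} (hu : 1 ≤ u) (hv : 1 ≤ v) :
    (tset b (u * v)).card ≤ (tset b u).card * (tset b v).card := by
  have huv : 1 ≤ u * v := Nat.one_le_iff_ne_zero.2 (by positivity)
  classical
  have key : ∀ z ∈ tset b (u * v), ∃ x : Fin b → ℕ, (∀ i, x i ∣ z i) ∧ ∏ i, x i = u := by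
    intro z hz
    exact exists_split b z u hu ((mem_tset huv).1 hz ▸ dvd_mul_right u v)
  choose! x hxd hxp using key
  rw [← Finset.card_product]
  apply Finset.card_le_card_of_injOn (fun z => (x z, fun i => z i / x z i))
  · intro z hz
    have hz' := (mem_tset huv).1 hz
    rw [Finset.mem_coe, Finset.mem_product]
    constructor
    · exact (mem_tset hu).2 (hxp z hz)
    · refine (mem_tset hv).2 ?_
      have : (∏ i, z i / x z i) * ∏ i, x z i = ∏ i, z i := by
        rw [← Finset.prod_mul_distrib]
        exact Finset.prod_congr rfl fun i _ => Nat.div_mul_cancel (hxd z hz i)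
      have hxu : ∏ i, x z i = u := hxp z hz
      rw [hxu, hz', mul_comm u v] at this
      exact Nat.eq_of_mul_eq_mul_right hu this
  · intro z1 h1 z2 h2 heq
    simp only [Prod.mk.injEq] at heq
    funext i
    have e1 : z1 i = x z1 i * (z1 i / x z1 i) := (Nat.mul_div_cancel' (hxd z1 h1 i)).symm
    have e2 : z2 i = x z2 i * (z2 i / x z2 i) := (Nat.mul_div_cancel' (hxd z2 h2 i)).symm
    rw [e1, e2, congrFun heq.2 i, heq.1]

lemma pos_of_mem_tset {a m : ℕ} (hm : 1 ≤ m) {x : Fin a → ℕ} (hx : x ∈ tset a m)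
    (i : Fin a) : 1 ≤ x i := by
  have h := (mem_tset hm).1 hx
  rcases Nat.eq_zero_or_pos (x i) with h0 | h1
  · rw [Finset.prod_eq_zero (mem_univ i) h0] at h; omega
  · exact h1

lemma tset_prod_le (b : ℕ) : ∀ (a : ℕ) (x : Fin a → ℕ), (∀ i, 1 ≤ x i) →
    (tset b (∏ i, x i)).card ≤ ∏ i, (tset b (x i)).card
  | 0, x, hx => by simp [tset_one_card]
  | (a+1), x, hx => by
      rw [Fin.prod_univ_succ, Fin.prod_univ_succ]
      calc (tset b (x 0 * ∏ i : Fin a, x i.succ)).card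
          ≤ (tset b (x 0)).card * (tset b (∏ i : Fin a, x i.succ)).card :=
            tset_mul_le (hx 0) (Finset.one_le_prod' fun i _ => hx i.succ)
        _ ≤ (tset b (x 0)).card * ∏ i : Fin a, (tset b (x i.succ)).card :=
            Nat.mul_le_mul_left _ (tset_prod_le b a (fun i => x i.succ) fun i => hx i.succ)

lemma tset_mul_eq {a b m : ℕ} (hm : 1 ≤ m) :
    (tset (a * b) m).card = ∑ x ∈ tset a m, ∏ i, (tset b (x i)).card := by
  classical
  set e : Fin a × Fin b ≃ Fin (a * b) := finProdFinEquiv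
  set Φ : (Fin (a * b) → ℕ) → (Fin a → ℕ) := fun z i => ∏ j, z (e (i, j)) with hΦ
  have hprod : ∀ z : Fin (a * b) → ℕ, ∏ i, Φ z i = ∏ t, z t := by
    intro z
    rw [hΦ]
    rw [← Fintype.prod_prod_type (fun p : Fin a × Fin b => z (e p))]
    exact Equiv.prod_comp e z
  have hmem : ∀ z ∈ tset (a * b) m, Φ z ∈ tset a m := by
    intro z hz
    exact (mem_tset hm).2 (by rw [hprod z]; exact (mem_tset hm).1 hz)
  rw [Finset.card_eq_sum_card_fiberwise hmem]
  refine Finset.sum_congr rfl fun x hx => ?_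
  rw [← Fintype.card_piFinset]
  apply Finset.card_bij' (fun z _ => fun i j => z (e (i, j)))
      (fun w _ => fun t => w (e.symm t).1 (e.symm t).2)
  · intro z hz
    simp only [Finset.mem_filter] at hz
    rw [Fintype.mem_piFinset]
    intro i
    refine (mem_tset (pos_of_mem_tset hm hx i)).2 ?_
    exact congrFun hz.2 i
  · intro w hw
    rw [Fintype.mem_piFinset] at hw
    have hxval : ∀ i, ∏ j, w i j = x i := fun i =>
      (mem_tset (pos_of_mem_tset hm hx i)).1 (hw i)
    rw [Finset.mem_filter]
    constructor
    · refine (mem_tset hm).2 ?_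
      have : ∏ t, w (e.symm t).1 (e.symm t).2 = ∏ p : Fin a × Fin b, w p.1 p.2 :=
        Equiv.prod_comp e.symm (fun p : Fin a × Fin b => w p.1 p.2)
      rw [this, Fintype.prod_prod_type]
      rw [← (mem_tset hm).1 hx]
      exact Finset.prod_congr rfl fun i _ => hxval i
    · funext i
      simp only [hΦ, Equiv.symm_apply_apply]
      exact hxval i
  · intro z hz
    funext t
    simp
  · intro w hw
    funext i j
    simp

lemma tset_mul_ge {a b m : ℕ} (hm : 1 ≤ m) :
    (tset a m).card * (tset b m).card ≤ (tset (a * b) m).card := by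
  rw [tset_mul_eq hm]
  have : (tset a m).card * (tset b m).card = ∑ _x ∈ tset a m, (tset b m).card := by
    rw [Finset.sum_const, smul_eq_mul]
  rw [this]
  refine Finset.sum_le_sum fun x hx => ?_
  calc (tset b m).card = (tset b (∏ i, x i)).card := by rw [(mem_tset hm).1 hx]
    _ ≤ ∏ i, (tset b (x i)).card := tset_prod_le b a x (pos_of_mem_tset hm hx)

lemma tset_pow_le {k m : ℕ} (hm : 1 ≤ m) : ∀ s : ℕ, 1 ≤ s →
    (tset k m).card ^ s ≤ (tset (k ^ s) m).card
  | 1, _ => by rw [pow_one, pow_one]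
  | (s+2), _ => by
      calc (tset k m).card ^ (s + 2) = (tset k m).card ^ (s+1) * (tset k m).card := by ring
        _ ≤ (tset (k ^ (s+1)) m).card * (tset k m).card :=
            Nat.mul_le_mul_right _ (tset_pow_le hm (s+1) (Nat.le_add_left 1 s))
        _ ≤ (tset (k ^ (s+1) * k) m).card := tset_mul_ge hm
        _ = (tset (k ^ (s+2)) m).card := by rw [← pow_succ]

lemma tset_succ {K m : ℕ} (hm : 1 ≤ m) :
    (tset (K + 1) m).card = ∑ d ∈ m.divisors, (tset K (m / d)).card := by
  classical
  have hmem : ∀ z ∈ tset (K + 1) m, z 0 ∈ m.divisors := by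
    intro z hz
    rw [Nat.mem_divisors]
    exact ⟨(mem_tset hm).1 hz ▸ Finset.dvd_prod_of_mem z (mem_univ 0), by omega⟩
  rw [Finset.card_eq_sum_card_fiberwise hmem]
  refine Finset.sum_congr rfl fun d hd => ?_
  have hdd : d ∣ m := (Nat.mem_divisors.1 hd).1
  have hdpos : 0 < d := Nat.pos_of_mem_divisors hd
  have hqpos : 1 ≤ m / d := Nat.div_pos (Nat.le_of_dvd hm hdd) hdpos
  refine Finset.card_bij' (fun z _ => Fin.tail z) (fun y _ => Fin.cons d y) ?_ ?_ ?_ ?_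
  · intro z hz
    simp only [Finset.mem_filter] at hz
    refine (mem_tset hqpos).2 ?_
    have hp : ∏ i, z i = m := (mem_tset hm).1 hz.1
    rw [Fin.prod_univ_succ, hz.2] at hp
    show ∏ i : Fin K, Fin.tail z i = m / d
    rw [← hp, Nat.mul_div_cancel_left _ hdpos]
    rfl
  · intro y hy
    simp only [Finset.mem_filter]
    refine ⟨(mem_tset hm).2 ?_, by simp⟩
    rw [Fin.prod_univ_succ]
    simp only [Fin.cons_zero, Fin.cons_succ]
    rw [(mem_tset hqpos).1 hy, Nat.mul_div_cancel' hdd]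
  · intro z hz
    simp only [Finset.mem_filter] at hz
    show Fin.cons d (Fin.tail z) = z
    rw [← hz.2]
    exact Fin.cons_self_tail z
  · intro y hy
    funext i
    simp [Fin.tail_cons]

lemma harmonic_le : ∀ N : ℕ, ∑ d ∈ Icc 1 N, (1 / (d : ℝ)) ≤ 1 + Real.log N
  | 0 => by simp
  | 1 => by norm_num
  | (N+2) => by
      have hN : (1:ℕ) ≤ N + 1 := le_refl 1 |>.trans (Nat.le_add_left 1 N)
      rw [show N + 2 = N + 1 + 1 from rfl, ← Finset.insert_Icc_right_eq_Icc_add_one (by omega : 1 ≤ N + 1 + 1)]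
      rw [Finset.sum_insert (by simp)]
      have ih := harmonic_le (N + 1)
      have hlog : (1 : ℝ) / (N + 2) ≤ Real.log (N + 2) - Real.log (N + 1) := by
        have h1 : (0:ℝ) < N + 1 := by positivity
        have h2 : (0:ℝ) < N + 2 := by positivity
        have := Real.log_le_sub_one_of_pos (x := (N + 1) / (N + 2)) (by positivity)
        rw [Real.log_div h1.ne' h2.ne'] at this
        have : Real.log (N+1) - Real.log (N+2) ≤ (N+1)/(N+2) - 1 := this
        have heq : (N+1:ℝ)/(N+2) - 1 = -(1/(N+2)) := by field_simp; norm_num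
        linarith [this, heq ▸ this]
      push_cast
      push_cast at ih hlog
      have e2 : ((N:ℝ) + 1 + 1) = ((N:ℝ) + 2) := by ring
      rw [e2]
      linarith

lemma swap_sum (N : ℕ) (f : ℕ → ℝ) :
    ∑ m ∈ Icc 1 N, ∑ p ∈ m.divisorsAntidiagonal, f p.2
      = ∑ d ∈ Icc 1 N, ∑ q ∈ Icc 1 (N / d), f q := by
  rw [Finset.sum_sigma', Finset.sum_sigma']
  refine Finset.sum_nbij' (fun x => ⟨x.2.1, x.2.2⟩) (fun y => ⟨y.1 * y.2, (y.1, y.2)⟩)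
    ?_ ?_ ?_ ?_ ?_
  · rintro ⟨m, d, q⟩ hx
    simp only [Finset.mem_sigma, Finset.mem_Icc, Nat.mem_divisorsAntidiagonal] at hx ⊢
    obtain ⟨⟨hm1, hm2⟩, hdq, hm0⟩ := hx
    have hdqpos : 0 < d * q := by omega
    have hd : 0 < d := Nat.pos_of_ne_zero (by rintro rfl; simp at hdqpos)
    have hq : 0 < q := Nat.pos_of_ne_zero (by rintro rfl; simp at hdqpos)
    refine ⟨⟨hd, ?_⟩, hq, ?_⟩
    · calc d ≤ d * q := Nat.le_mul_of_pos_right d hq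
        _ = m := hdq
        _ ≤ N := hm2
    · rw [Nat.le_div_iff_mul_le hd, mul_comm, hdq]
      exact hm2
  · rintro ⟨d, q⟩ hy
    simp only [Finset.mem_sigma, Finset.mem_Icc, Nat.mem_divisorsAntidiagonal] at hy ⊢
    obtain ⟨⟨hd1, hd2⟩, hq1, hq2⟩ := hy
    have hdqN : d * q ≤ N := by
      rw [mul_comm]
      exact (Nat.le_div_iff_mul_le (by omega : 0 < d)).1 hq2
    refine ⟨⟨?_, hdqN⟩, ?_⟩
    · exact Nat.one_le_iff_ne_zero.2 (by positivity)
    · exact ⟨trivial, by positivity⟩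
  · rintro ⟨m, d, q⟩ hx
    simp only [Finset.mem_sigma, Nat.mem_divisorsAntidiagonal] at hx
    have : d * q = m := hx.2.1
    subst this
    rfl
  · rintro ⟨d, q⟩ hy
    rfl
  · rintro ⟨m, d, q⟩ hx
    rfl

lemma tauk_succ {K m : ℕ} (hm : 1 ≤ m) :
    tauk (K + 1) m = ∑ d ∈ m.divisors, tauk K (m / d) := tset_succ hm

lemma main_bound : ∀ K, 1 ≤ K → ∀ M : ℝ, 1 ≤ M →
    ∑ m ∈ Icc 1 ⌊M⌋₊, (tauk K m : ℝ) ≤ M * (1 + Real.log M) ^ (K - 1) := by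
  intro K hK
  induction K, hK using Nat.le_induction with
  | base =>
    intro M hM
    have : ∑ m ∈ Icc 1 ⌊M⌋₊, (tauk 1 m : ℝ) = ∑ m ∈ Icc 1 ⌊M⌋₊, (1 : ℝ) := by
      refine Finset.sum_congr rfl fun m hm => ?_
      rw [tauk_one_left (Finset.mem_Icc.1 hm).1]
      norm_num
    rw [this, Finset.sum_const, Nat.card_Icc]
    norm_num
    exact Nat.floor_le (by linarith)
  | succ K hK IH =>
    intro M hM
    have hM0 : (0:ℝ) < M := by linarith
    set N := ⌊M⌋₊ with hN
    have hNM : (N : ℝ) ≤ M := Nat.floor_le hM0.le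
    have step1 : ∑ m ∈ Icc 1 N, (tauk (K+1) m : ℝ)
        = ∑ m ∈ Icc 1 N, ∑ p ∈ m.divisorsAntidiagonal, (tauk K p.2 : ℝ) := by
      refine Finset.sum_congr rfl fun m hm => ?_
      rw [tauk_succ (Finset.mem_Icc.1 hm).1]
      push_cast
      rw [Nat.sum_divisorsAntidiagonal (f := fun _ q => (tauk K q : ℝ))]
    rw [step1, swap_sum N (fun q => (tauk K q : ℝ))]
    have inner : ∀ d ∈ Icc 1 N, ∑ q ∈ Icc 1 (N / d), (tauk K q : ℝ)
        ≤ (M / d) * (1 + Real.log M) ^ (K - 1) := by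
      intro d hd
      rw [Finset.mem_Icc] at hd
      have hd1 : (1:ℝ) ≤ d := by exact_mod_cast hd.1
      have hdM : (d:ℝ) ≤ M := le_trans (by exact_mod_cast hd.2) hNM
      have hMd : 1 ≤ M / d := (one_le_div (by linarith)).2 hdM
      have : N / d = ⌊M / d⌋₊ := by rw [Nat.floor_div_natCast]
      rw [this]
      refine (IH (M / d) hMd).trans ?_
      have hlog : Real.log (M / d) ≤ Real.log M :=
        Real.log_le_log (by positivity) (div_le_self hM0.le hd1)
      have hbase : (0:ℝ) ≤ 1 + Real.log (M / d) := by
        have := Real.log_nonneg hMd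
        linarith
      exact mul_le_mul_of_nonneg_left
        (pow_le_pow_left₀ hbase (by linarith) _) (by positivity)
    calc ∑ d ∈ Icc 1 N, ∑ q ∈ Icc 1 (N / d), (tauk K q : ℝ)
        ≤ ∑ d ∈ Icc 1 N, (M / d) * (1 + Real.log M) ^ (K - 1) :=
          Finset.sum_le_sum inner
      _ = M * (1 + Real.log M) ^ (K - 1) * ∑ d ∈ Icc 1 N, (1 / (d:ℝ)) := by
          rw [Finset.mul_sum]
          refine Finset.sum_congr rfl fun d hd => ?_
          ring
      _ ≤ M * (1 + Real.log M) ^ (K - 1) * (1 + Real.log N) := by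
          refine mul_le_mul_of_nonneg_left (harmonic_le N) ?_
          have := Real.log_nonneg hM
          positivity
      _ ≤ M * (1 + Real.log M) ^ (K - 1) * (1 + Real.log M) := by
          have hN1 : 1 ≤ N := Nat.le_floor (by exact_mod_cast hM)
          have : Real.log N ≤ Real.log M := Real.log_le_log (by exact_mod_cast hN1) hNM
          refine mul_le_mul_of_nonneg_left (by linarith) ?_
          have := Real.log_nonneg hM
          positivity
      _ = M * (1 + Real.log M) ^ (K + 1 - 1) := by
          rw [mul_assoc, ← pow_succ]
          congr 2
          omega

theorem sum_tauk_pow_le (k s : ℕ) (hk : 1 ≤ k) (hs : 1 ≤ s) (M : ℝ) (hM : 3 ≤ M) :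
    ∑ m ∈ Finset.Icc 1 ⌊M⌋₊, (tauk k m : ℝ) ^ s ≤ M * (2 * Real.log M) ^ (k ^ s - 1) := by
  have hM1 : (1:ℝ) ≤ M := by linarith
  have hks : 1 ≤ k ^ s := Nat.one_le_pow s k hk
  have hlog1 : 1 ≤ Real.log M := by
    rw [Real.le_log_iff_exp_le (by linarith)]
    calc Real.exp 1 ≤ 2.7182818286 := Real.exp_one_lt_d9.le
      _ ≤ M := by linarith
  calc ∑ m ∈ Finset.Icc 1 ⌊M⌋₊, (tauk k m : ℝ) ^ s
      ≤ ∑ m ∈ Finset.Icc 1 ⌊M⌋₊, (tauk (k ^ s) m : ℝ) := by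
        refine Finset.sum_le_sum fun m hm => ?_
        have hm1 : 1 ≤ m := (Finset.mem_Icc.1 hm).1
        have := tset_pow_le (k := k) hm1 s hs
        rw [tauk_eq_card, tauk_eq_card]
        exact_mod_cast this
    _ ≤ M * (1 + Real.log M) ^ (k ^ s - 1) := main_bound (k ^ s) hks M hM1
    _ ≤ M * (2 * Real.log M) ^ (k ^ s - 1) := by
        refine mul_le_mul_of_nonneg_left
          (pow_le_pow_left₀ (by linarith) (by linarith) _) (by linarith)
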